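/- Let X be a real d-by-n matrix, and let X̄ = X·(I − (1/n)·11ᵀ) be the column-centered version of X. Then the determinant of the centered scatter matrix is bounded by that of the non-centered one: 0 ≤ det(X̄·X̄ᵀ) ≤ det(X·Xᵀ). -/

import Mathlib

open Matrix

private lemma psd_det_nonneg {m : Type*} [Fintype m] [DecidableEq m]
    {A : Matrix m m ℝ} (hA : A.PosSemidef) : 0 ≤ A.det := by
  rw [hA.isHermitian.det_eq_prod_eigenvalues]
  exact Finset.prod_nonneg fun i _ => hA.eigenvalues_nonneg i

private lemma det_le_det_add_rank_one {m : Type*} [Fintype m] [DecidableEq m]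
    {A : Matrix m m ℝ} (hA : A.PosSemidef) (c : ℝ) (hc : 0 ≤ c) (v : m → ℝ) :
    A.det ≤ (A + replicateCol Unit (c • v) * replicateRow Unit v).det := by
  have hpsd : (replicateCol Unit v * replicateRow Unit v).PosSemidef := by
    have := posSemidef_self_mul_conjTranspose (replicateCol Unit v)
    simpa [conjTranspose_replicateCol] using this
  have hcol : replicateCol Unit (c • v) * replicateRow Unit v = c • (replicateCol Unit v * replicateRow Unit v) := by
    ext i j
    simp [mul_apply, Pi.smul_apply, smul_eq_mul]
    ring
  by_cases h : IsUnit A.det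
  · rw [det_add_replicateCol_mul_replicateRow h]
    have hq : 0 ≤ (replicateRow Unit v * A⁻¹ * replicateCol Unit (c • v)) default default := by
      have hAinv : A⁻¹.PosSemidef := hA.inv
      have hquad : 0 ≤ v ⬝ᵥ (A⁻¹ *ᵥ (c • v)) := by
        have h1 : 0 ≤ v ⬝ᵥ (A⁻¹ *ᵥ v) := by
          have := hAinv.dotProduct_mulVec_nonneg v
          simpa using this
        have : A⁻¹ *ᵥ (c • v) = c • (A⁻¹ *ᵥ v) := by
          simp [mulVec_smul]
        rw [this, dotProduct_smul]
        exact mul_nonneg hc h1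
      calc (0:ℝ) ≤ v ⬝ᵥ (A⁻¹ *ᵥ (c • v)) := hquad
        _ = (replicateRow Unit v * A⁻¹ * replicateCol Unit (c • v)) default default := by
          simp [mul_apply, mulVec, dotProduct, Finset.mul_sum, Finset.sum_mul]
          rw [Finset.sum_comm]
          refine Finset.sum_congr rfl fun i _ => Finset.sum_congr rfl fun j _ => ?_
          ring
    have hdet1 : (1 + replicateRow Unit v * A⁻¹ * replicateCol Unit (c • v)).det
        = 1 + (replicateRow Unit v * A⁻¹ * replicateCol Unit (c • v)) default default := by
      rw [det_unique]
      simp [Matrix.one_apply]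
    have hApos : 0 ≤ A.det := psd_det_nonneg hA
    rw [hdet1]
    nlinarith
  · have hdet0 : A.det = 0 := by
      by_contra h0
      exact h (isUnit_iff_ne_zero.mpr h0)
    rw [hdet0]
    apply psd_det_nonneg
    rw [hcol]
    refine hA.add (PosSemidef.of_dotProduct_mulVec_nonneg ?_ ?_)
    · unfold Matrix.IsHermitian
      rw [conjTranspose_smul, hpsd.1.eq]
      simp
    · intro x
      have h2 := hpsd.dotProduct_mulVec_nonneg x
      rw [smul_mulVec, dotProduct_smul]
      simp only [smul_eq_mul]
      exact mul_nonneg hc (by simpa using h2)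

/-- With `X̄ = X·(I - (1/n)·11ᵀ)` the column-centered version of `X`,
the determinant of the centered scatter matrix is bounded by that of the non-centered
one: `0 ≤ det(X̄·X̄ᵀ) ≤ det(X·Xᵀ)`. -/
theorem det_centered_scatter_le {d n : ℕ} (hn : 0 < n)
    (X : Matrix (Fin d) (Fin n) ℝ)
    (Xbar : Matrix (Fin d) (Fin n) ℝ)
    (hXbar : Xbar = X * (1 - (n : ℝ)⁻¹ • Matrix.of (fun _ _ => (1 : ℝ)))) :
    0 ≤ (Xbar * Xbarᵀ).det ∧ (Xbar * Xbarᵀ).det ≤ (X * Xᵀ).det := by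
  have hpsd : (Xbar * Xbarᵀ).PosSemidef := by
    have := posSemidef_self_mul_conjTranspose Xbar
    simpa using this
  refine ⟨psd_det_nonneg hpsd, ?_⟩
  set E : Matrix (Fin n) (Fin n) ℝ := Matrix.of (fun _ _ => (1 : ℝ)) with hE
  set w : Fin d → ℝ := X *ᵥ (fun _ => 1) with hw
  have hnR : (0:ℝ) < (n:ℝ) := by exact_mod_cast hn
  have hEE : E * E = (n : ℝ) • E := by
    ext i j
    simp [hE, mul_apply]
  have hETrans : Eᵀ = E := by ext i j; simp [hE]
  have hJ : (1 - (n : ℝ)⁻¹ • E) * (1 - (n : ℝ)⁻¹ • E)ᵀ = 1 - (n : ℝ)⁻¹ • E := by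
    rw [transpose_sub, transpose_one, transpose_smul, hETrans]
    rw [sub_mul, mul_sub, mul_sub, one_mul, mul_one, smul_mul_smul_comm, hEE]
    rw [smul_smul]
    have : (n : ℝ)⁻¹ * (n : ℝ)⁻¹ * (n : ℝ) = (n : ℝ)⁻¹ := by
      field_simp
    rw [this]
    simp only [Matrix.one_mul, Matrix.mul_one]
    abel
  have hXbarScatter : Xbar * Xbarᵀ = X * Xᵀ - (n : ℝ)⁻¹ • (X * E * Xᵀ) := by
    rw [show Xbar = X * (1 - (n : ℝ)⁻¹ • E) from hXbar, transpose_mul, Matrix.mul_assoc, ← Matrix.mul_assoc (1 - (n : ℝ)⁻¹ • E), hJ]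
    rw [Matrix.sub_mul, Matrix.one_mul, Matrix.smul_mul, Matrix.mul_sub, Matrix.mul_smul]
    rw [Matrix.mul_assoc]
  have hXEXt : X * E * Xᵀ = replicateCol Unit w * replicateRow Unit w := by
    ext i j
    simp [mul_apply, hE, hw, mulVec, dotProduct, Finset.sum_mul, Finset.mul_sum]
  have key : X * Xᵀ = Xbar * Xbarᵀ + replicateCol Unit ((n:ℝ)⁻¹ • w) * replicateRow Unit w := by
    have hc : replicateCol Unit ((n:ℝ)⁻¹ • w) * replicateRow Unit w = (n:ℝ)⁻¹ • (replicateCol Unit w * replicateRow Unit w) := by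
      ext i j
      simp [mul_apply, Pi.smul_apply, smul_eq_mul]
      ring
    rw [hc, ← hXEXt, hXbarScatter]
    abel
  rw [key]
  exact det_le_det_add_rank_one hpsd ((n:ℝ)⁻¹) (by positivity) w
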